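/- Conditional law of the warped sample given the index: let θ ~ π = q/c on ℝ^d, sample ψ = k with probability ϖ(k|θ) = φ^{(k)}(θ)/φ_mix(θ) where φ^{(k)}(θ) = w_k |S_k^{-1}| φ(S_k^{-1}(θ - μ_k)), and set θ* = S_ψ^{-1}(θ - μ_ψ). Then P(ψ = k) = w_k c_k / c and the conditional density of θ* given ψ = k equals p̃_k(θ*) = q̃_k(θ*)/c_k, where q̃_k(θ*) = φ(θ*) q(S_k θ* + μ_k)/φ_mix(S_k θ* + μ_k). -/

import Mathlib

open MeasureTheory Matrix Real
open scoped ENNReal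

lemma warpU_aux_map {α β : Type*} [MeasurableSpace α] [MeasurableSpace β] (μ : Measure α)
    {f : α → β} (hf : Measurable f) {g : β → ℝ≥0∞} (hg : Measurable g) :
    (μ.withDensity (fun x => g (f x))).map f = (μ.map f).withDensity g := by
  ext s hs
  rw [Measure.map_apply hf hs, withDensity_apply _ (hf hs), withDensity_apply _ hs,
    setLIntegral_map hs hg hf]

/-- Conditional law of the warped sample given the index: let `θ ~ π = q/c` on `ℝ^d`,
sample `ψ = k` with probability `ϖ(k|θ) = φ^{(k)}(θ)/φ_mix(θ)`, and set
`θ* = S_ψ⁻¹(θ − μ_ψ)`.  Then `P(ψ = k) = w_k c_k / c` and the conditional density of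
`θ*` given `ψ = k` is `p̃_k = q̃_k / c_k`.  Formally, the sub-probability law of `θ*` on
the event `{ψ = k}` — namely the pushforward under `F_k` of the measure with density
`θ ↦ ϖ(k|θ) π(θ)` — has total mass `w_k c_k / c` and equals `(w_k c_k / c)` times the
probability measure with density `p̃_k`. -/
theorem warpU_conditional_law
    (d K : ℕ) (hd : 0 < d) (hK : 0 < K)
    (w : Fin K → ℝ) (hw : ∀ k, 0 ≤ w k) (hwsum : ∑ k, w k = 1)
    (μv : Fin K → (Fin d → ℝ))
    (S : Fin K → Matrix (Fin d) (Fin d) ℝ) (hS : ∀ k, IsUnit (S k).det)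
    (φ : (Fin d → ℝ) → ℝ)
    (hφ : φ = fun x => (2 * π) ^ (-(d : ℝ) / 2) * Real.exp (-(∑ i, x i ^ 2) / 2))
    (φcomp : Fin K → (Fin d → ℝ) → ℝ)
    (hφcomp : φcomp = fun k θ => w k * |((S k)⁻¹).det| * φ ((S k)⁻¹.mulVec (θ - μv k)))
    (φmix : (Fin d → ℝ) → ℝ) (hφmix : φmix = fun θ => ∑ k, φcomp k θ)
    (hφmixpos : ∀ θ, 0 < φmix θ)
    (ϖ : Fin K → (Fin d → ℝ) → ℝ) (hϖ : ϖ = fun k θ => φcomp k θ / φmix θ)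
    (q : (Fin d → ℝ) → ℝ) (hq : ∀ θ, 0 ≤ q θ) (hqm : Measurable q)
    (hqi : Integrable q volume)
    (c : ℝ) (hc : c = ∫ θ, q θ) (hcpos : 0 < c)
    (F : Fin K → (Fin d → ℝ) → (Fin d → ℝ))
    (hF : F = fun k θ => (S k)⁻¹.mulVec (θ - μv k))
    (qtk : Fin K → (Fin d → ℝ) → ℝ)
    (hqtk : qtk = fun k θs =>
      φ θs * (q ((S k).mulVec θs + μv k) / φmix ((S k).mulVec θs + μv k)))
    (ck : Fin K → ℝ) (hck : ∀ k, ck k = ∫ θs, qtk k θs) :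
    ∀ k : Fin K,
      ((volume.withDensity fun θ => ENNReal.ofReal (ϖ k θ * (q θ / c))).map (F k))
          Set.univ = ENNReal.ofReal (w k * ck k / c) ∧
      ((volume.withDensity fun θ => ENNReal.ofReal (ϖ k θ * (q θ / c))).map (F k))
        = volume.withDensity fun θs =>
            ENNReal.ofReal ((w k * ck k / c) * (qtk k θs / ck k)) := by
  intro k
  classical
  -- basic facts about the matrices
  set A := (S k)⁻¹ with hAdef
  have hdetS : (S k).det ≠ 0 := by
    intro h; exact (by simpa [h] using hS k : IsUnit (0:ℝ)).ne_zero rfl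
  have hAdet : A.det = ((S k).det)⁻¹ := by
    simpa [hAdef] using Matrix.det_nonsing_inv (A := S k)
  have hdetA : A.det ≠ 0 := by rw [hAdet]; exact inv_ne_zero hdetS
  have habsAS : |A.det| = |(S k).det|⁻¹ := by rw [hAdet, abs_inv]
  have habsA_pos : 0 < |A.det| := abs_pos.mpr hdetA
  have habsS_pos : 0 < |(S k).det| := abs_pos.mpr hdetS
  -- inverse map
  set G : (Fin d → ℝ) → (Fin d → ℝ) := fun θs => (S k).mulVec θs + μv k with hG
  have hGapp : ∀ x, (S k).mulVec x + μv k = G x := fun _ => rfl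
  have hFG : ∀ θs, F k (G θs) = θs := by
    intro θs
    simp only [hF, hG]
    rw [add_sub_cancel_right, Matrix.mulVec_mulVec, Matrix.nonsing_inv_mul (S k) (hS k),
      Matrix.one_mulVec]
  have hGF : ∀ θ, G (F k θ) = θ := by
    intro θ
    simp only [hF, hG]
    rw [Matrix.mulVec_mulVec, Matrix.mul_nonsing_inv (S k) (hS k), Matrix.one_mulVec,
      sub_add_cancel]
  have hAGθ : ∀ θs, (S k)⁻¹.mulVec (G θs - μv k) = θs := by
    intro θs
    have := hFG θs
    simp only [hF] at this
    exact this
  -- continuity / measurability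
  have hmulveccont : ∀ (M : Matrix (Fin d) (Fin d) ℝ),
      Continuous (fun v : Fin d → ℝ => M.mulVec v) := by
    intro M
    have := LinearMap.continuous_on_pi (Matrix.toLin' M)
    convert this using 1; funext v; simp [Matrix.toLin'_apply]
  have hFc : Continuous (F k) := by
    rw [hF]
    exact (hmulveccont A).comp (continuous_id.sub continuous_const)
  have hFm : Measurable (F k) := hFc.measurable
  have hGc : Continuous G := by
    rw [hG]
    exact ((hmulveccont (S k)).comp continuous_id).add continuous_const
  have hGm : Measurable G := hGc.measurable
  have hφc : Continuous φ := by
    rw [hφ]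
    exact continuous_const.mul ((continuous_finset_sum _ fun i _ =>
      (continuous_apply i).pow 2).neg.div_const 2).rexp
  have hφpos : ∀ x, 0 < φ x := by
    intro x
    rw [hφ]
    have h2π : (0:ℝ) < 2 * π := by positivity
    positivity
  have hφcompc : ∀ j, Continuous (φcomp j) := by
    intro j
    rw [hφcomp]
    exact continuous_const.mul
      (hφc.comp ((hmulveccont _).comp (continuous_id.sub continuous_const)))
  have hφcompnn : ∀ j θ, 0 ≤ φcomp j θ := by
    intro j θ
    simp only [hφcomp]
    exact mul_nonneg (mul_nonneg (hw j) (abs_nonneg _)) (hφpos _).le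
  have hφmixc : Continuous φmix := by
    rw [hφmix]; exact continuous_finset_sum _ fun j _ => hφcompc j
  have hϖc : Continuous (ϖ k) := by
    rw [hϖ]
    exact (hφcompc k).div hφmixc fun θ => (hφmixpos θ).ne'
  have hφcompG : ∀ θs, φcomp k (G θs) = w k * |A.det| * φ θs := by
    intro θs
    simp only [hφcomp]
    rw [hAGθ θs]
  -- the density and its pushforward
  set g : (Fin d → ℝ) → ℝ≥0∞ := fun θ => ENNReal.ofReal (ϖ k θ * (q θ / c)) with hgdef
  have hgm : Measurable g :=
    ENNReal.measurable_ofReal.comp (hϖc.measurable.mul (hqm.div_const c))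
  have hgGm : Measurable fun θs => g (G θs) := hgm.comp hGm
  have hcoeA : ⇑(Matrix.toLin' A) = fun v : Fin d → ℝ => A.mulVec v := by
    funext v; simp [Matrix.toLin'_apply]
  have hcoeS : ⇑(Matrix.toLin' (S k)) = fun v : Fin d → ℝ => (S k).mulVec v := by
    funext v; simp [Matrix.toLin'_apply]
  -- pushforward of volume under F k
  have hmapF : volume.map (F k) = ENNReal.ofReal |(S k).det| • volume := by
    have h1 : F k = (⇑(Matrix.toLin' A)) ∘ (fun θ : Fin d → ℝ => θ - μv k) := by
      funext θ; simp [hF, Matrix.toLin'_apply]; rfl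
    have hAm : Measurable (⇑(Matrix.toLin' A)) := by
      rw [hcoeA]; exact (hmulveccont A).measurable
    have hsubm : Measurable (fun θ : Fin d → ℝ => θ - μv k) :=
      measurable_id.sub measurable_const
    have h2 := Measure.map_map (μ := (volume : Measure (Fin d → ℝ))) hAm hsubm
    rw [h1, ← h2, (measurePreserving_sub_right volume (μv k)).map_eq,
      Real.map_matrix_volume_pi_eq_smul_volume_pi hdetA, hAdet, inv_inv]
  -- pushforward of volume under G
  have hmapG : volume.map G = ENNReal.ofReal |A.det| • volume := by
    have h1 : G = (fun v : Fin d → ℝ => v + μv k) ∘ (⇑(Matrix.toLin' (S k))) := by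
      funext θs; simp [hG, Matrix.toLin'_apply]
    have hSm : Measurable (⇑(Matrix.toLin' (S k))) := by
      rw [hcoeS]; exact (hmulveccont (S k)).measurable
    have haddm : Measurable (fun v : Fin d → ℝ => v + μv k) :=
      measurable_id.add_const (μv k)
    have h2 := Measure.map_map (μ := (volume : Measure (Fin d → ℝ))) haddm hSm
    rw [h1, ← h2, Real.map_matrix_volume_pi_eq_smul_volume_pi hdetS, Measure.map_smul,
      (measurePreserving_add_right volume (μv k)).map_eq, ← hAdet]
  -- key: pushforward of the weighted measure
  have hkey : (volume.withDensity g).map (F k)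
      = volume.withDensity (fun θs => ENNReal.ofReal (w k * qtk k θs / c)) := by
    have h1 : (volume.withDensity g) = volume.withDensity (fun θ => g (G (F k θ))) := by
      congr 1; ext θ; rw [hGF]
    rw [h1, warpU_aux_map volume hFm hgGm, hmapF, withDensity_smul_measure,
      ← withDensity_smul _ hgGm]
    congr 1
    funext θs
    simp only [Pi.smul_apply]
    have hφm' : 0 < φmix (G θs) := hφmixpos _
    have h2 : (ENNReal.ofReal |(S k).det| • g (G θs))
        = ENNReal.ofReal (|(S k).det| * (ϖ k (G θs) * (q (G θs) / c))) := by
      rw [hgdef, smul_eq_mul, ← ENNReal.ofReal_mul (abs_nonneg _)]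
    rw [h2]
    congr 1
    simp only [hϖ, hqtk, hφcompG, hGapp, habsAS]
    field_simp
  -- case distinction on w k
  by_cases hwk : w k = 0
  · constructor
    · rw [hkey, withDensity_apply _ MeasurableSet.univ, Measure.restrict_univ]
      simp [hwk]
    · rw [hkey]
      congr 1; funext θs; simp [hwk]
  · have hwkpos : 0 < w k := lt_of_le_of_ne (hw k) (Ne.symm hwk)
    -- nonnegativity and measurability of qtk
    have hqtknn : ∀ θs, 0 ≤ qtk k θs := by
      intro θs
      simp only [hqtk]
      exact mul_nonneg (hφpos _).le (div_nonneg (hq _) (hφmixpos _).le)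
    have hqtkm : Measurable (qtk k) := by
      rw [hqtk]
      exact hφc.measurable.mul ((hqm.comp hGm).div (hφmixc.measurable.comp hGm))
    -- integrability of q ∘ G
    have hqGi : Integrable (fun θs => q (G θs)) volume := by
      have h1 : Integrable q (volume.map G) := by
        rw [hmapG]
        exact hqi.smul_measure ENNReal.ofReal_ne_top
      exact (integrable_map_measure hqm.aestronglyMeasurable hGm.aemeasurable).mp h1
    -- pointwise bound for qtk
    have hbound : ∀ θs, qtk k θs ≤ (w k * |A.det|)⁻¹ * q (G θs) := by
      intro θs
      have hlb : w k * |A.det| * φ θs ≤ φmix (G θs) := by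
        rw [← hφcompG θs, hφmix]
        exact Finset.single_le_sum (fun j _ => hφcompnn j (G θs)) (Finset.mem_univ k)
      have hq' := hq (G θs)
      have hφ' := hφpos θs
      have hm' := hφmixpos (G θs)
      have hwa : (0:ℝ) < w k * |A.det| := by positivity
      simp only [hqtk, hGapp]
      rw [mul_comm (φ θs), div_mul_eq_mul_div, div_le_iff₀ hm', inv_mul_eq_div,
        div_mul_eq_mul_div, le_div_iff₀ hwa]
      calc q (G θs) * φ θs * (w k * |A.det|) = q (G θs) * (w k * |A.det| * φ θs) := by ring
        _ ≤ q (G θs) * φmix (G θs) := mul_le_mul_of_nonneg_left hlb hq'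
    have hqtki : Integrable (qtk k) volume := by
      refine Integrable.mono' (hqGi.const_mul ((w k * |A.det|)⁻¹))
        hqtkm.aestronglyMeasurable ?_
      filter_upwards with θs
      rw [Real.norm_of_nonneg (hqtknn θs)]
      exact hbound θs
    -- positivity of ck
    have hckk : ck k = ∫ θs, qtk k θs := hck k
    have hcknn : 0 ≤ ck k := by rw [hckk]; exact integral_nonneg hqtknn
    have hckpos : 0 < ck k := by
      rcases hcknn.lt_or_eq with h | h
      · exact h
      · exfalso
        have h0 : ∫ θs, qtk k θs = 0 := by rw [← hckk, ← h]
        have hae : (fun θs => qtk k θs) =ᵐ[volume] 0 :=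
          (integral_eq_zero_iff_of_nonneg hqtknn hqtki).mp h0
        have haeq : (fun θs => q (G θs)) =ᵐ[volume] 0 := by
          filter_upwards [hae] with θs hθs
          have h1 : qtk k θs = 0 := hθs
          simp only [hqtk, hGapp] at h1
          rcases mul_eq_zero.mp h1 with h2 | h2
          · exact absurd h2 (hφpos θs).ne'
          · rcases div_eq_zero_iff.mp h2 with h3 | h3
            · exact h3
            · exact absurd h3 (hφmixpos _).ne'
        have hint0 : ∫ θs, q (G θs) = 0 := integral_eq_zero_of_ae haeq
        have hintpos : ∫ θs, q (G θs) = |A.det| * c := by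
          rw [← integral_map hGm.aemeasurable hqm.aestronglyMeasurable, hmapG,
            integral_smul_measure, hc]
          simp [ENNReal.toReal_ofReal (abs_nonneg _), smul_eq_mul]
        rw [hintpos] at hint0
        nlinarith
    -- the integral of the density
    have hint2 : ∫ θs, w k * qtk k θs / c = w k * ck k / c := by
      simp_rw [mul_div_assoc]
      rw [integral_const_mul, hckk, ← integral_div]
    constructor
    · rw [hkey, withDensity_apply _ MeasurableSet.univ, Measure.restrict_univ, ← hint2,
        ofReal_integral_eq_lintegral_ofReal ((hqtki.const_mul (w k)).div_const c)
          (Filter.Eventually.of_forall fun θs =>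
            div_nonneg (mul_nonneg (hw k) (hqtknn θs)) hcpos.le)]
    · rw [hkey]
      congr 1
      funext θs
      congr 1
      field_simp
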